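/- H_{−1} bound via the spectral gap (Proposition 4.4). Let r, ε₀, L be as in the lattice gas setup, fix ρ ∈ (0,1), and suppose the spectral gap inequality ∫ h² dν_ρ ≤ κ₀ ℓ² E_ℓ(h) holds with constant κ₀ for all ℓ and all local h supported in {1,…,ℓ} with φ_h ≡ 0. Then there exists a constant c depending only on κ₀ and ε₀ such that for every ℓ ∈ ℕ and every local f with supp(f) ⊆ {1,…,ℓ} and φ_f(β) = 0 for all β ∈ [0,1], one has ‖f‖²_{−1} := sup over local g of {2⟨f,g⟩_ρ − ⟨g, −Lg⟩_ρ} ≤ c · ℓ² · Var(f; ν_ρ). -/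

import Mathlib

open MeasureTheory Finset

noncomputable section

/-- Configurations of the lattice gas: elements of `{0,1}^ℤ`, encoded as `ℤ → Bool`. -/
abbrev Cfg : Type := ℤ → Bool

/-- The configuration whose occupied sites are exactly the finite set `S`. -/
def cfgOf (S : Finset ℤ) : Cfg := fun z => decide (z ∈ S)

/-- `f` depends only on the coordinates in the finite set `A`
(i.e. `f` is local with `supp f ⊆ A`). -/
def LocalOn (A : Finset ℤ) (f : Cfg → ℝ) : Prop :=
  ∀ η ξ : Cfg, (∀ x ∈ A, η x = ξ x) → f η = f ξ

/-- `f` is a local function. -/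
def IsLocal (f : Cfg → ℝ) : Prop := ∃ A : Finset ℤ, LocalOn A f

/-- For `f` depending only on the coordinates in `A`, `phi A f β = ∫ f dν_β` where `ν_β`
is the Bernoulli product measure of density `β`; written as an explicit polynomial in `β`. -/
def phi (A : Finset ℤ) (f : Cfg → ℝ) (β : ℝ) : ℝ :=
  ∑ S ∈ A.powerset, β ^ S.card * (1 - β) ^ (A.card - S.card) * f (cfgOf S)

/-- `ψ_f(ℓ; m)`: the average of `f` over all configurations of `{1,…,ℓ}`
having exactly `m` particles. -/
def condAvg (ℓ m : ℕ) (f : Cfg → ℝ) : ℝ :=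
  (∑ S ∈ (Finset.Icc (1 : ℤ) (ℓ : ℤ)).powerset.filter (fun S => S.card = m), f (cfgOf S))
    / (ℓ.choose m : ℝ)

/-- `μ` is the product Bernoulli measure on `{0,1}^ℤ` of density `ρ`: it is a probability
measure under which the coordinates are i.i.d. with `μ(η x = 1) = ρ`. -/
def IsBernoulliProduct (ρ : ℝ) (μ : Measure Cfg) : Prop :=
  IsProbabilityMeasure μ ∧
    ∀ (A : Finset ℤ) (σ : Cfg),
      (μ {η : Cfg | ∀ x ∈ A, η x = σ x}).toReal
        = ∏ x ∈ A, (if σ x then ρ else 1 - ρ)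

/-- The number of particles of `η` in `{1,…,ℓ}`. -/
def numOnes (ℓ : ℕ) (η : Cfg) : ℕ := ∑ x ∈ Finset.Icc (1 : ℤ) (ℓ : ℤ), (η x).toNat

/-- The empirical density `η^ℓ` of particles in `{1,…,ℓ}`. -/
def empDens (ℓ : ℕ) (η : Cfg) : ℝ := (numOnes ℓ η : ℝ) / (ℓ : ℝ)

/-- `ψ_f(ℓ)`: the conditional expectation of `f` given the particle number in `{1,…,ℓ}`,
as a function on configurations. -/
def psiFun (ℓ : ℕ) (f : Cfg → ℝ) : Cfg → ℝ := fun η => condAvg ℓ (numOnes ℓ η) f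

/-- The variance of `g` with respect to the measure `μ`. -/
def Var (μ : Measure Cfg) (g : Cfg → ℝ) : ℝ := ∫ η, (g η - ∫ ξ, g ξ ∂μ) ^ 2 ∂μ

/-- The configuration `η^{x,y}`, obtained from `η` by exchanging coordinates `x` and `y`. -/
def swapCfg (x y : ℤ) (η : Cfg) : Cfg :=
  fun z => if z = x then η y else if z = y then η x else η z

/-- `∇_{x,y} f (η) = f(η^{x,y}) - f(η)`. -/
def discGrad (x y : ℤ) (f : Cfg → ℝ) : Cfg → ℝ := fun η => f (swapCfg x y η) - f η

/-- The translated rate `r_x = τ_x r`, the exchange rate of the bond `{x, x+1}`;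
it does not depend on the coordinates `x` and `x+1` when `r` does not depend on
the coordinates `0` and `1`. -/
def shiftRate (r : Cfg → ℝ) (x : ℤ) (η : Cfg) : ℝ := r (fun z => η (z + x))

/-- The lattice gas generator `L f = ∑_{x ∈ ℤ} r_x ∇_{x,x+1} f`; for local `f` the sum
has only finitely many nonzero terms. -/
def genL (r : Cfg → ℝ) (f : Cfg → ℝ) : Cfg → ℝ :=
  fun η => ∑ᶠ x : ℤ, shiftRate r x η * discGrad x (x + 1) f η


/-! ### Auxiliary machinery -/

section Aux

/-- The weight of configuration `S` in the Bernoulli product measure restricted to `A`. -/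
def wt (ρ : ℝ) (A S : Finset ℤ) : ℝ := ρ ^ S.card * (1 - ρ) ^ (A.card - S.card)

/-- The cylinder set of configurations agreeing with `σ` on `A`. -/
def cyl (A : Finset ℤ) (σ : Cfg) : Set Cfg := {η : Cfg | ∀ x ∈ A, η x = σ x}

lemma measurableSet_cyl (A : Finset ℤ) (σ : Cfg) : MeasurableSet (cyl A σ) := by
  have h : cyl A σ = ⋂ x ∈ (A : Set ℤ), (fun η : Cfg => η x) ⁻¹' {σ x} := by
    ext η; simp [cyl]
  rw [h]
  exact MeasurableSet.biInter A.countable_toSet fun x _ =>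
    (measurable_pi_apply x) (measurableSet_singleton _)

lemma LocalOn.mono {A B : Finset ℤ} {f : Cfg → ℝ} (hAB : A ⊆ B) (hf : LocalOn A f) :
    LocalOn B f := fun η ξ h => hf η ξ fun x hx => h x (hAB hx)

lemma LocalOn.mul {A : Finset ℤ} {f g : Cfg → ℝ} (hf : LocalOn A f) (hg : LocalOn A g) :
    LocalOn A (fun η => f η * g η) := fun η ξ h => by dsimp only; rw [hf η ξ h, hg η ξ h]

lemma LocalOn.sub {A : Finset ℤ} {f g : Cfg → ℝ} (hf : LocalOn A f) (hg : LocalOn A g) :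
    LocalOn A (fun η => f η - g η) := fun η ξ h => by dsimp only; rw [hf η ξ h, hg η ξ h]

lemma LocalOn.sq {A : Finset ℤ} {f : Cfg → ℝ} (hf : LocalOn A f) :
    LocalOn A (fun η => f η ^ 2) := fun η ξ h => by dsimp only; rw [hf η ξ h]

lemma LocalOn.const_mul {A : Finset ℤ} {f : Cfg → ℝ} (hf : LocalOn A f) (c : ℝ) :
    LocalOn A (fun η => c * f η) := fun η ξ h => by dsimp only; rw [hf η ξ h]

lemma LocalOn.finsum {κ : Type*} {A : Finset ℤ} {s : Finset κ} {F : κ → Cfg → ℝ}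
    (h : ∀ k ∈ s, LocalOn A (F k)) : LocalOn A (fun η => ∑ k ∈ s, F k η) :=
  fun η ξ hagree => Finset.sum_congr rfl fun k hk => h k hk η ξ hagree

lemma local_repr {A : Finset ℤ} {f : Cfg → ℝ} (hf : LocalOn A f) (η : Cfg) :
    f η = ∑ S ∈ A.powerset, (cyl A (cfgOf S)).indicator (fun _ => f (cfgOf S)) η := by
  classical
  set S₀ := A.filter (fun x => η x = true) with hS₀def
  have hS₀ : S₀ ∈ A.powerset := Finset.mem_powerset.2 (Finset.filter_subset _ _)
  have hagree : ∀ x ∈ A, η x = cfgOf S₀ x := by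
    intro x hx
    cases hb : η x <;> simp [cfgOf, hS₀def, hx, hb]
  rw [Finset.sum_eq_single_of_mem S₀ hS₀]
  · rw [Set.indicator_of_mem (show η ∈ cyl A (cfgOf S₀) from hagree)]
    exact hf η (cfgOf S₀) hagree
  · intro S hS hne
    apply Set.indicator_of_notMem
    intro hmem
    apply hne
    have hSA := Finset.mem_powerset.1 hS
    apply Finset.ext
    intro x
    constructor
    · intro hxS
      have hxA := hSA hxS
      have h1 := hmem x hxA
      simp only [cfgOf, hxS, decide_eq_true_eq] at h1
      simp [hS₀def, hxA, h1]
    · intro hx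
      rw [hS₀def, Finset.mem_filter] at hx
      have h1 := hmem x hx.1
      rw [hx.2] at h1
      simpa [cfgOf] using h1.symm

lemma integrable_localOn {μ : Measure Cfg} [IsProbabilityMeasure μ]
    {A : Finset ℤ} {f : Cfg → ℝ} (hf : LocalOn A f) : Integrable f μ := by
  have h : f = fun η => ∑ S ∈ A.powerset, (cyl A (cfgOf S)).indicator (fun _ => f (cfgOf S)) η :=
    funext (local_repr hf)
  rw [h]
  exact integrable_finset_sum _ fun S _ =>
    (integrable_const _).indicator (measurableSet_cyl A (cfgOf S))

lemma prod_ite_cfgOf {ρ : ℝ} {A S : Finset ℤ} (hS : S ⊆ A) :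
    (∏ x ∈ A, (if cfgOf S x then ρ else 1 - ρ)) = wt ρ A S := by
  rw [← Finset.prod_sdiff hS]
  have h1 : ∀ x ∈ S, (if cfgOf S x then ρ else 1 - ρ) = ρ := by
    intro x hx; simp [cfgOf, hx]
  have h2 : ∀ x ∈ A \ S, (if cfgOf S x then ρ else 1 - ρ) = 1 - ρ := by
    intro x hx
    rw [Finset.mem_sdiff] at hx
    simp [cfgOf, hx.2]
  rw [Finset.prod_congr rfl h1, Finset.prod_congr rfl h2, Finset.prod_const, Finset.prod_const,
    Finset.card_sdiff_of_subset hS, wt, mul_comm]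

lemma integral_localOn {ρ : ℝ} {μ : Measure Cfg} (hμ : IsBernoulliProduct ρ μ)
    {A : Finset ℤ} {f : Cfg → ℝ} (hf : LocalOn A f) :
    ∫ η, f η ∂μ = ∑ S ∈ A.powerset, wt ρ A S * f (cfgOf S) := by
  haveI := hμ.1
  rw [show (fun η => f η)
      = fun η => ∑ S ∈ A.powerset, (cyl A (cfgOf S)).indicator (fun _ => f (cfgOf S)) η from
    funext (local_repr hf)]
  rw [integral_finset_sum _ fun S _ =>
    (integrable_const _).indicator (measurableSet_cyl A (cfgOf S))]
  refine Finset.sum_congr rfl fun S hS => ?_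
  rw [integral_indicator_const _ (measurableSet_cyl A (cfgOf S)), smul_eq_mul]
  congr 1
  exact (hμ.2 A (cfgOf S)).trans (prod_ite_cfgOf (Finset.mem_powerset.1 hS))

lemma wt_nonneg {ρ : ℝ} (h0 : 0 ≤ ρ) (h1 : ρ ≤ 1) (A S : Finset ℤ) : 0 ≤ wt ρ A S :=
  mul_nonneg (pow_nonneg h0 _) (pow_nonneg (by linarith) _)

lemma sum_wt_eq_one {ρ : ℝ} {μ : Measure Cfg} (hμ : IsBernoulliProduct ρ μ) (A : Finset ℤ) :
    ∑ S ∈ A.powerset, wt ρ A S = 1 := by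
  haveI := hμ.1
  have h := integral_localOn hμ (A := A) (f := fun _ => (1 : ℝ)) (fun _ _ _ => rfl)
  simpa using h.symm

lemma wt_union {ρ : ℝ} {I J S₁ S₂ : Finset ℤ} (hIJ : Disjoint I J) (h1 : S₁ ⊆ I) (h2 : S₂ ⊆ J) :
    wt ρ (I ∪ J) (S₁ ∪ S₂) = wt ρ I S₁ * wt ρ J S₂ := by
  have hd : Disjoint S₁ S₂ := hIJ.mono h1 h2
  have c1 : S₁.card ≤ I.card := Finset.card_le_card h1
  have c2 : S₂.card ≤ J.card := Finset.card_le_card h2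
  rw [wt, wt, wt, Finset.card_union_of_disjoint hd, Finset.card_union_of_disjoint hIJ,
    show I.card + J.card - (S₁.card + S₂.card)
      = (I.card - S₁.card) + (J.card - S₂.card) by omega, pow_add, pow_add]
  ring

lemma sum_split {ρ : ℝ} {I J : Finset ℤ} (hIJ : Disjoint I J) (G : Finset ℤ → ℝ) :
    ∑ S ∈ (I ∪ J).powerset, wt ρ (I ∪ J) S * G S
      = ∑ S₁ ∈ I.powerset, ∑ S₂ ∈ J.powerset, wt ρ I S₁ * wt ρ J S₂ * G (S₁ ∪ S₂) := by
  classical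
  rw [← Finset.sum_product']
  refine Finset.sum_nbij' (fun S => (S ∩ I, S ∩ J)) (fun p => p.1 ∪ p.2) ?_ ?_ ?_ ?_ ?_
  · intro S hS
    exact Finset.mk_mem_product (Finset.mem_powerset.2 Finset.inter_subset_right)
      (Finset.mem_powerset.2 Finset.inter_subset_right)
  · intro p hp
    rw [Finset.mem_product] at hp
    exact Finset.mem_powerset.2 (Finset.union_subset_union
      (Finset.mem_powerset.1 hp.1) (Finset.mem_powerset.1 hp.2))
  · intro S hS
    have hsub := Finset.mem_powerset.1 hS
    dsimp only
    rw [← Finset.inter_union_distrib_left, Finset.inter_eq_left.2 hsub]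
  · intro p hp
    rw [Finset.mem_product] at hp
    have h1 := Finset.mem_powerset.1 hp.1
    have h2 := Finset.mem_powerset.1 hp.2
    have e1 : (p.1 ∪ p.2) ∩ I = p.1 := by
      rw [Finset.union_inter_distrib_right, Finset.inter_eq_left.2 h1,
        Finset.disjoint_iff_inter_eq_empty.1 (hIJ.symm.mono h2 le_rfl),
        Finset.union_empty]
    have e2 : (p.1 ∪ p.2) ∩ J = p.2 := by
      rw [Finset.union_inter_distrib_right, Finset.inter_eq_left.2 h2,
        Finset.disjoint_iff_inter_eq_empty.1 (hIJ.mono h1 le_rfl),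
        Finset.empty_union]
    exact Prod.ext e1 e2
  · intro S hS
    have hsub := Finset.mem_powerset.1 hS
    have hU : (S ∩ I) ∪ (S ∩ J) = S := by
      rw [← Finset.inter_union_distrib_left, Finset.inter_eq_left.2 hsub]
    have hw : wt ρ (I ∪ J) S = wt ρ I (S ∩ I) * wt ρ J (S ∩ J) := by
      conv_lhs => rw [← hU]
      exact wt_union hIJ Finset.inter_subset_right Finset.inter_subset_right
    dsimp only
    rw [hU, hw]

lemma sum_powerset_card {M : Type*} [AddCommMonoid M] (A : Finset ℤ) (F : Finset ℤ → M) :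
    ∑ S ∈ A.powerset, F S = ∑ m ∈ Finset.range (A.card + 1), ∑ S ∈ A.powersetCard m, F S := by
  rw [Finset.powerset_card_disjiUnion]; exact Finset.sum_disjiUnion _ _ _

lemma coeffs_zero {A : Finset ℤ} {f : Cfg → ℝ}
    (h : ∀ β ∈ Set.Icc (0 : ℝ) 1, phi A f β = 0) (m : ℕ) :
    ∑ S ∈ A.powersetCard m, f (cfgOf S) = 0 := by
  classical
  set n := A.card with hn
  set a : ℕ → ℝ := fun k => ∑ S ∈ A.powersetCard k, f (cfgOf S) with ha
  by_cases hm : m ≤ n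
  · set p : Polynomial ℝ :=
      ∑ k ∈ Finset.range (n + 1), Polynomial.C (a k) * Polynomial.X ^ k with hp
    have heval : ∀ t : ℝ, 0 ≤ t → p.eval t = 0 := by
      intro t ht
      have h1t : (0 : ℝ) < 1 + t := by linarith
      set β := t / (1 + t) with hβ
      have hβ0 : 0 ≤ β := div_nonneg ht h1t.le
      have hβ1 : β ≤ 1 := by rw [hβ, div_le_one h1t]; linarith
      have h1β : 1 - β = 1 / (1 + t) := by rw [hβ]; field_simp; ring
      have hphi := h β ⟨hβ0, hβ1⟩
      rw [phi, sum_powerset_card] at hphi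
      have hphi' : ∑ k ∈ Finset.range (n + 1), a k * t ^ k / (1 + t) ^ n = 0 := by
        rw [← hphi]
        refine Finset.sum_congr rfl fun k hk => ?_
        have hk' : k ≤ n := Nat.lt_succ_iff.1 (Finset.mem_range.1 hk)
        have hpow : β ^ k * (1 - β) ^ (n - k) = t ^ k / (1 + t) ^ n := by
          rw [h1β, hβ, div_pow, div_pow, one_pow, div_mul_div_comm, ← pow_add,
            Nat.add_sub_cancel' hk', mul_one]
        have hterm : ∀ S ∈ A.powersetCard k,
            β ^ S.card * (1 - β) ^ (A.card - S.card) * f (cfgOf S)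
              = t ^ k / (1 + t) ^ n * f (cfgOf S) := by
          intro S hS
          rw [(Finset.mem_powersetCard.1 hS).2, ← hn, hpow]
        rw [Finset.sum_congr rfl hterm, ← Finset.mul_sum, ha]
        ring
      have hnum : ∑ k ∈ Finset.range (n + 1), a k * t ^ k = 0 := by
        have h2 : (∑ k ∈ Finset.range (n + 1), a k * t ^ k) / (1 + t) ^ n = 0 := by
          rw [← hphi', Finset.sum_div]
        rcases div_eq_zero_iff.1 h2 with h3 | h3
        · exact h3
        · exact absurd h3 (pow_ne_zero _ h1t.ne')
      have : p.eval t = ∑ k ∈ Finset.range (n + 1), a k * t ^ k := by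
        rw [hp, Polynomial.eval_finset_sum]
        simp
      rw [this, hnum]
    have hp0 : p = 0 := p.eq_zero_of_infinite_isRoot <| by
      exact Set.Infinite.mono (fun t ht => heval t ht) (Set.Ici_infinite (0 : ℝ))
    have hc : p.coeff m = a m := by
      rw [hp, Polynomial.finset_sum_coeff]
      simp only [Polynomial.coeff_C_mul, Polynomial.coeff_X_pow, mul_ite, mul_one, mul_zero]
      rw [Finset.sum_ite_eq (Finset.range (n + 1)) m a]
      simp [Nat.lt_succ_iff, hm]
    have : a m = 0 := by rw [← hc, hp0]; simp
    simpa [ha] using this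
  · have he : A.powersetCard m = ∅ := Finset.powersetCard_eq_empty.2 (by omega)
    simp [he]

lemma swapCfg_eq (x y : ℤ) (η : Cfg) : swapCfg x y η = fun z => η (Equiv.swap x y z) := by
  funext z
  rw [swapCfg, Equiv.swap_apply_def]
  split_ifs <;> rfl

lemma swapCfg_cfgOf (x y : ℤ) (S : Finset ℤ) :
    swapCfg x y (cfgOf S) = cfgOf (S.image (Equiv.swap x y)) := by
  funext z
  rw [swapCfg_eq]
  show cfgOf S (Equiv.swap x y z) = cfgOf (S.image (Equiv.swap x y)) z
  simp only [cfgOf]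
  apply decide_eq_decide.2
  constructor
  · intro hz
    exact Finset.mem_image.2 ⟨Equiv.swap x y z, hz, Equiv.swap_apply_self x y z⟩
  · intro hz
    obtain ⟨a, ha, rfl⟩ := Finset.mem_image.1 hz
    rwa [Equiv.swap_apply_self]

lemma localOn_comp_swap {A : Finset ℤ} {x y : ℤ} {f : Cfg → ℝ} (hx : x ∈ A) (hy : y ∈ A)
    (hf : LocalOn A f) : LocalOn A (fun η => f (swapCfg x y η)) := by
  intro η ξ h
  dsimp only
  apply hf
  intro z hz
  rw [swapCfg, swapCfg]
  split_ifs with h1 h2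
  · exact h y hy
  · exact h x hx
  · exact h z hz

lemma LocalOn.discGrad' {A : Finset ℤ} {x y : ℤ} {f : Cfg → ℝ} (hx : x ∈ A) (hy : y ∈ A)
    (hf : LocalOn A f) : LocalOn A (discGrad x y f) :=
  (localOn_comp_swap hx hy hf).sub hf

lemma sum_powerset_swap {ρ : ℝ} {A : Finset ℤ} {x y : ℤ} (hx : x ∈ A) (hy : y ∈ A)
    (F : Finset ℤ → ℝ) :
    ∑ S ∈ A.powerset, wt ρ A S * F (S.image (Equiv.swap x y))
      = ∑ S ∈ A.powerset, wt ρ A S * F S := by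
  classical
  have hmaps : ∀ S : Finset ℤ, S ∈ A.powerset → S.image (Equiv.swap x y) ∈ A.powerset := by
    intro S hS
    refine Finset.mem_powerset.2 fun z hz => ?_
    obtain ⟨a, ha, rfl⟩ := Finset.mem_image.1 hz
    rw [Equiv.swap_apply_def]
    split_ifs with h1 h2
    · exact hy
    · exact hx
    · exact Finset.mem_powerset.1 hS ha
  have hinv : ∀ S : Finset ℤ, (S.image (Equiv.swap x y)).image (Equiv.swap x y) = S := by
    intro S
    rw [Finset.image_image]
    have : (Equiv.swap x y) ∘ (Equiv.swap x y) = id := by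
      funext z; simp [Equiv.swap_apply_self]
    rw [this, Finset.image_id]
  refine Finset.sum_nbij' (fun S => S.image (Equiv.swap x y))
    (fun S => S.image (Equiv.swap x y)) hmaps hmaps (fun S _ => hinv S) (fun S _ => hinv S) ?_
  intro S hS
  congr 1
  rw [wt, wt, Finset.card_image_of_injective _ (Equiv.injective _)]

lemma integral_comp_swap {ρ : ℝ} {μ : Measure Cfg} (hμ : IsBernoulliProduct ρ μ)
    {A : Finset ℤ} {x y : ℤ} {f : Cfg → ℝ} (hx : x ∈ A) (hy : y ∈ A) (hf : LocalOn A f) :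
    ∫ η, f (swapCfg x y η) ∂μ = ∫ η, f η ∂μ := by
  rw [integral_localOn hμ (localOn_comp_swap hx hy hf), integral_localOn hμ hf]
  rw [show (fun S => wt ρ A S * f (swapCfg x y (cfgOf S)))
      = fun S => wt ρ A S * f (cfgOf (S.image (Equiv.swap x y))) from
    funext fun S => by rw [swapCfg_cfgOf]]
  exact sum_powerset_swap hx hy (fun S => f (cfgOf S))

lemma numOnes_cfgOf {ℓ : ℕ} {S : Finset ℤ} (hS : S ⊆ Finset.Icc (1 : ℤ) (ℓ : ℤ)) :
    numOnes ℓ (cfgOf S) = S.card := by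
  rw [numOnes]
  have h1 : ∀ x ∈ Finset.Icc (1 : ℤ) (ℓ : ℤ), (cfgOf S x).toNat = if x ∈ S then 1 else 0 := by
    intro x hx
    by_cases h : x ∈ S <;> simp [cfgOf, h]
  rw [Finset.sum_congr rfl h1, Finset.sum_ite_mem, Finset.inter_eq_right.2 hS,
    Finset.sum_const, smul_eq_mul, mul_one]

lemma numOnes_swap {ℓ : ℕ} {x y : ℤ} (hx : x ∈ Finset.Icc (1 : ℤ) (ℓ : ℤ))
    (hy : y ∈ Finset.Icc (1 : ℤ) (ℓ : ℤ)) (η : Cfg) :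
    numOnes ℓ (swapCfg x y η) = numOnes ℓ η := by
  rw [numOnes, numOnes, swapCfg_eq]
  have hmaps : ∀ z ∈ Finset.Icc (1 : ℤ) (ℓ : ℤ), Equiv.swap x y z ∈ Finset.Icc (1 : ℤ) (ℓ : ℤ) := by
    intro z hz
    rw [Equiv.swap_apply_def]
    split_ifs with h1 h2
    · exact hy
    · exact hx
    · exact hz
  refine Finset.sum_nbij' (fun z => Equiv.swap x y z) (fun z => Equiv.swap x y z)
    hmaps hmaps (fun z _ => Equiv.swap_apply_self x y z) (fun z _ => Equiv.swap_apply_self x y z)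
    (fun z _ => rfl)

def merge (J T : Finset ℤ) (η : Cfg) : Cfg := fun z => if z ∈ J then decide (z ∈ T) else η z

lemma merge_cfgOf {J T S : Finset ℤ} (hT : T ⊆ J) (hS : Disjoint S J) :
    merge J T (cfgOf S) = cfgOf (S ∪ T) := by
  funext z
  rw [merge]
  by_cases hz : z ∈ J
  · have hzS : z ∉ S := fun h => (Finset.disjoint_left.1 hS h) hz
    simp [cfgOf, hz, hzS]
  · have hzT : z ∉ T := fun h => hz (hT h)
    simp [cfgOf, hz, hzT]

lemma merge_swap {J T : Finset ℤ} {x y : ℤ} (hx : x ∉ J) (hy : y ∉ J) (η : Cfg) :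
    merge J T (swapCfg x y η) = swapCfg x y (merge J T η) := by
  funext z
  by_cases hz : z ∈ J
  · have hzx : z ≠ x := by rintro rfl; exact hx hz
    have hzy : z ≠ y := by rintro rfl; exact hy hz
    simp [swapCfg, merge, hz, hzx, hzy]
  · simp only [swapCfg, merge]
    split_ifs with h1 h2 <;> simp_all

lemma localOn_merge {B J : Finset ℤ} (T : Finset ℤ) {g : Cfg → ℝ} (hg : LocalOn B g) :
    LocalOn (B \ J) (fun η => g (merge J T η)) := by
  intro η ξ h
  dsimp only
  apply hg
  intro z hz
  rw [merge, merge]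
  by_cases hzJ : z ∈ J
  · simp [hzJ]
  · simp only [if_neg hzJ]
    exact h z (Finset.mem_sdiff.2 ⟨hz, hzJ⟩)

lemma localOn_shiftRate {R : Finset ℤ} {r : Cfg → ℝ} (hr : LocalOn R r) (x : ℤ) :
    LocalOn (R.image (fun z => z + x)) (shiftRate r x) := by
  intro η ξ h
  apply hr
  intro z hz
  exact h (z + x) (Finset.mem_image_of_mem _ hz)

lemma shiftRate_swap {r : Cfg → ℝ}
    (hr01 : ∀ η ξ : Cfg, (∀ z : ℤ, z ≠ 0 → z ≠ 1 → η z = ξ z) → r η = r ξ)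
    (x : ℤ) (η : Cfg) : shiftRate r x (swapCfg x (x + 1) η) = shiftRate r x η := by
  apply hr01
  intro z hz0 hz1
  have h1 : z + x ≠ x := by omega
  have h2 : z + x ≠ x + 1 := by omega
  simp [swapCfg, h1, h2]

lemma bond_identity {ρ : ℝ} {μ : Measure Cfg} (hμ : IsBernoulliProduct ρ μ)
    {r : Cfg → ℝ} {R : Finset ℤ} (hR : LocalOn R r)
    (hr01 : ∀ η ξ : Cfg, (∀ x : ℤ, x ≠ 0 → x ≠ 1 → η x = ξ x) → r η = r ξ)
    {B : Finset ℤ} {g : Cfg → ℝ} (hg : LocalOn B g) (x : ℤ) :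
    ∫ η, g η * (shiftRate r x η * discGrad x (x + 1) g η) ∂μ
      = -(1 / 2) * ∫ η, shiftRate r x η * (discGrad x (x + 1) g η) ^ 2 ∂μ := by
  classical
  haveI := hμ.1
  set A : Finset ℤ := (R.image (fun z => z + x)) ∪ (B ∪ {x, x + 1}) with hA
  have hxA : x ∈ A := by simp [hA]
  have hx1A : x + 1 ∈ A := by simp [hA]
  have hu : LocalOn A (shiftRate r x) :=
    (localOn_shiftRate hR x).mono Finset.subset_union_left
  have hgA : LocalOn A g :=
    hg.mono (Finset.subset_union_left.trans Finset.subset_union_right)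
  have hg' : LocalOn A (fun η => g (swapCfg x (x + 1) η)) := localOn_comp_swap hxA hx1A hgA
  set u : Cfg → ℝ := shiftRate r x with hudef
  set v' : Cfg → ℝ := fun η => g (swapCfg x (x + 1) η) with hv'def
  have huswap : ∀ η, u (swapCfg x (x + 1) η) = u η := fun η => shiftRate_swap hr01 x η
  set P : ℝ := ∫ η, u η * (g η * v' η) ∂μ with hP
  set Q : ℝ := ∫ η, u η * g η ^ 2 ∂μ with hQ
  have hQ' : ∫ η, u η * v' η ^ 2 ∂μ = Q := by
    rw [hQ]
    rw [show (fun η => u η * v' η ^ 2)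
        = fun η => (fun ξ => u ξ * g ξ ^ 2) (swapCfg x (x + 1) η) from
      funext fun η => by
        show u η * v' η ^ 2 = u (swapCfg x (x + 1) η) * g (swapCfg x (x + 1) η) ^ 2
        rw [huswap η]]
    exact integral_comp_swap hμ hxA hx1A (hu.mul hgA.sq)
  have hiP : Integrable (fun η => u η * (g η * v' η)) μ :=
    integrable_localOn (hu.mul (hgA.mul hg'))
  have hiQ : Integrable (fun η => u η * g η ^ 2) μ := integrable_localOn (hu.mul hgA.sq)
  have hiQ' : Integrable (fun η => u η * v' η ^ 2) μ := integrable_localOn (hu.mul hg'.sq)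
  have hL : ∫ η, g η * (shiftRate r x η * discGrad x (x + 1) g η) ∂μ = P - Q := by
    rw [show (fun η => g η * (shiftRate r x η * discGrad x (x + 1) g η))
        = fun η => u η * (g η * v' η) - u η * g η ^ 2 from
      funext fun η => by
        show g η * (u η * (g (swapCfg x (x + 1) η) - g η)) = u η * (g η * v' η) - u η * g η ^ 2
        show g η * (u η * (v' η - g η)) = u η * (g η * v' η) - u η * g η ^ 2
        ring]
    rw [integral_sub hiP hiQ]
  have hR' : ∫ η, shiftRate r x η * (discGrad x (x + 1) g η) ^ 2 ∂μ = 2 * Q - 2 * P := by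
    rw [show (fun η => shiftRate r x η * (discGrad x (x + 1) g η) ^ 2)
        = fun η => (u η * v' η ^ 2 + u η * g η ^ 2) - 2 * (u η * (g η * v' η)) from
      funext fun η => by
        show u η * (g (swapCfg x (x + 1) η) - g η) ^ 2 = _
        show u η * (v' η - g η) ^ 2 = _
        ring]
    have hiS : Integrable (fun η => u η * v' η ^ 2 + u η * g η ^ 2) μ :=
      integrable_localOn (A := A) (fun η ξ hagr => by
        show u η * v' η ^ 2 + u η * g η ^ 2 = u ξ * v' ξ ^ 2 + u ξ * g ξ ^ 2
        rw [hu η ξ hagr, hg' η ξ hagr, hgA η ξ hagr])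
    rw [integral_sub hiS (hiP.const_mul 2), integral_add hiQ' hiQ,
      integral_const_mul, hQ']
    ring
  rw [hL, hR']
  ring

lemma dirichlet_bound {ρ ε₀ : ℝ} (hε : 0 < ε₀) {μ : Measure Cfg} (hμ : IsBernoulliProduct ρ μ)
    {r : Cfg → ℝ} (hrloc : IsLocal r) (hrb : ∀ η, ε₀ ≤ r η ∧ r η ≤ ε₀⁻¹)
    (hr01 : ∀ η ξ : Cfg, (∀ x : ℤ, x ≠ 0 → x ≠ 1 → η x = ξ x) → r η = r ξ)
    {B : Finset ℤ} {g : Cfg → ℝ} (hg : LocalOn B g) (ℓ : ℕ) :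
    ε₀ / 2 * ∑ x ∈ Finset.Ico (1 : ℤ) (ℓ : ℤ), ∫ η, (discGrad x (x + 1) g η) ^ 2 ∂μ
      ≤ - ∫ η, g η * genL r g η ∂μ := by
  classical
  haveI := hμ.1
  obtain ⟨R, hR⟩ := hrloc
  set N : Finset ℤ := (B ∪ B.image (fun z => z - 1)) ∪ Finset.Ico (1 : ℤ) (ℓ : ℤ) with hN
  have hgrad0 : ∀ x : ℤ, x ∉ B → x + 1 ∉ B → ∀ η, discGrad x (x + 1) g η = 0 := by
    intro x hx hx1 η
    rw [discGrad]
    have : g (swapCfg x (x + 1) η) = g η := by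
      apply hg
      intro z hz
      have hzx : z ≠ x := by rintro rfl; exact hx hz
      have hzx1 : z ≠ x + 1 := by rintro rfl; exact hx1 hz
      simp [swapCfg, hzx, hzx1]
    rw [this, sub_self]
  have hsupp : ∀ η, (Function.support fun x => shiftRate r x η * discGrad x (x + 1) g η)
      ⊆ (N : Set ℤ) := by
    intro η x hx
    by_contra hxN
    apply hx
    have hxB : x ∉ B := fun h => hxN (by simp [hN, h])
    have hx1B : x + 1 ∉ B := fun h =>
      hxN (by simp only [hN, Finset.coe_union, Set.mem_union, Finset.coe_image, Set.mem_image]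
              exact Or.inl (Or.inr ⟨x + 1, by simpa using h, by ring⟩))
    show shiftRate r x η * discGrad x (x + 1) g η = 0
    rw [hgrad0 x hxB hx1B η, mul_zero]
  have hgen : ∀ η, genL r g η = ∑ x ∈ N, shiftRate r x η * discGrad x (x + 1) g η :=
    fun η => finsum_eq_sum_of_support_subset _ (hsupp η)
  have hlocx : ∀ x : ℤ, LocalOn ((R.image (fun z => z + x)) ∪ (B ∪ {x, x + 1}))
      (fun η => g η * (shiftRate r x η * discGrad x (x + 1) g η)) := by
    intro x
    have hxA : x ∈ (R.image (fun z => z + x)) ∪ (B ∪ {x, x + 1}) := by simp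
    have hx1A : x + 1 ∈ (R.image (fun z => z + x)) ∪ (B ∪ {x, x + 1}) := by simp
    have hgA : LocalOn ((R.image (fun z => z + x)) ∪ (B ∪ {x, x + 1})) g :=
      hg.mono (Finset.subset_union_left.trans Finset.subset_union_right)
    exact hgA.mul (((localOn_shiftRate hR x).mono Finset.subset_union_left).mul
      (hgA.discGrad' hxA hx1A))
  have hsplit : ∫ η, g η * genL r g η ∂μ
      = ∑ x ∈ N, ∫ η, g η * (shiftRate r x η * discGrad x (x + 1) g η) ∂μ := by
    rw [show (fun η => g η * genL r g η)
        = fun η => ∑ x ∈ N, g η * (shiftRate r x η * discGrad x (x + 1) g η) from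
      funext fun η => by rw [hgen η, Finset.mul_sum]]
    exact integral_finset_sum _ fun x _ => integrable_localOn (hlocx x)
  have hterm : ∀ x : ℤ, ∫ η, g η * (shiftRate r x η * discGrad x (x + 1) g η) ∂μ
      = -(1 / 2) * ∫ η, shiftRate r x η * (discGrad x (x + 1) g η) ^ 2 ∂μ :=
    fun x => bond_identity hμ hR hr01 hg x
  have hIcoN : Finset.Ico (1 : ℤ) (ℓ : ℤ) ⊆ N := by rw [hN]; exact Finset.subset_union_right
  have hnn : ∀ x : ℤ, 0 ≤ ∫ η, shiftRate r x η * (discGrad x (x + 1) g η) ^ 2 ∂μ := by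
    intro x
    apply integral_nonneg
    intro η
    exact mul_nonneg (le_trans hε.le
      (show ε₀ ≤ shiftRate r x η from (hrb (fun z => η (z + x))).1)) (sq_nonneg _)
  have hlow : ∀ x : ℤ, ε₀ * ∫ η, (discGrad x (x + 1) g η) ^ 2 ∂μ
      ≤ ∫ η, shiftRate r x η * (discGrad x (x + 1) g η) ^ 2 ∂μ := by
    intro x
    have hxA : x ∈ (R.image (fun z => z + x)) ∪ (B ∪ {x, x + 1}) := by simp
    have hx1A : x + 1 ∈ (R.image (fun z => z + x)) ∪ (B ∪ {x, x + 1}) := by simp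
    have hgA : LocalOn ((R.image (fun z => z + x)) ∪ (B ∪ {x, x + 1})) g :=
      hg.mono (Finset.subset_union_left.trans Finset.subset_union_right)
    have h1 : Integrable (fun η => ε₀ * (discGrad x (x + 1) g η) ^ 2) μ :=
      integrable_localOn (((hgA.discGrad' hxA hx1A).sq).const_mul ε₀)
    have h2 : Integrable (fun η => shiftRate r x η * (discGrad x (x + 1) g η) ^ 2) μ :=
      integrable_localOn (((localOn_shiftRate hR x).mono Finset.subset_union_left).mul
        ((hgA.discGrad' hxA hx1A).sq))
    calc ε₀ * ∫ η, (discGrad x (x + 1) g η) ^ 2 ∂μ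
        = ∫ η, ε₀ * (discGrad x (x + 1) g η) ^ 2 ∂μ := (integral_const_mul _ _).symm
      _ ≤ ∫ η, shiftRate r x η * (discGrad x (x + 1) g η) ^ 2 ∂μ := by
          refine integral_mono h1 h2 fun η => ?_
          exact mul_le_mul_of_nonneg_right
            (show ε₀ ≤ shiftRate r x η from (hrb (fun z => η (z + x))).1) (sq_nonneg _)
  calc ε₀ / 2 * ∑ x ∈ Finset.Ico (1 : ℤ) (ℓ : ℤ), ∫ η, (discGrad x (x + 1) g η) ^ 2 ∂μ
      = ∑ x ∈ Finset.Ico (1 : ℤ) (ℓ : ℤ), (1 / 2) * (ε₀ * ∫ η, (discGrad x (x + 1) g η) ^ 2 ∂μ)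
        := by rw [Finset.mul_sum]; exact Finset.sum_congr rfl fun x _ => by ring
    _ ≤ ∑ x ∈ Finset.Ico (1 : ℤ) (ℓ : ℤ),
          (1 / 2) * ∫ η, shiftRate r x η * (discGrad x (x + 1) g η) ^ 2 ∂μ := by
          refine Finset.sum_le_sum fun x _ => ?_
          have := hlow x
          linarith
    _ ≤ ∑ x ∈ N, (1 / 2) * ∫ η, shiftRate r x η * (discGrad x (x + 1) g η) ^ 2 ∂μ := by
          refine Finset.sum_le_sum_of_subset_of_nonneg hIcoN fun x _ _ => ?_
          have := hnn x
          linarith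
    _ = - ∫ η, g η * genL r g η ∂μ := by
          rw [hsplit, ← Finset.sum_neg_distrib]
          refine Finset.sum_congr rfl fun x _ => ?_
          rw [hterm x]
          ring

/-- The block average of `g` over the coordinates in `J`. -/
def gbarF (ρ : ℝ) (J : Finset ℤ) (g : Cfg → ℝ) : Cfg → ℝ :=
  fun η => ∑ T ∈ J.powerset, wt ρ J T * g (merge J T η)

/-- The recentered block average. -/
def hF (ρ : ℝ) (J : Finset ℤ) (ℓ : ℕ) (g : Cfg → ℝ) : Cfg → ℝ :=
  fun η => gbarF ρ J g η - psiFun ℓ (gbarF ρ J g) η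

end Aux

/-- **H₋₁ bound via the spectral gap** (Proposition 4.4). In the lattice gas setup, if
the spectral gap inequality holds with constant `κ₀`, then there is a constant `c`
depending only on `κ₀` and `ε₀` such that for every `ℓ` and every local `f` supported
in `{1,…,ℓ}` with `φ_f ≡ 0` on `[0,1]`, and every local `g`,
`2⟨f,g⟩_ρ − ⟨g, −Lg⟩_ρ ≤ c ℓ² Var(f; ν_ρ)`; i.e. `‖f‖²₋₁ ≤ c ℓ² Var(f; ν_ρ)`. -/
theorem H_minus_one_bound (κ₀ ε₀ : ℝ) (hε : 0 < ε₀) :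
    ∃ c : ℝ, ∀ r : Cfg → ℝ, IsLocal r →
      (∀ η, ε₀ ≤ r η ∧ r η ≤ ε₀⁻¹) →
      (∀ η ξ : Cfg, (∀ x : ℤ, x ≠ 0 → x ≠ 1 → η x = ξ x) → r η = r ξ) →
      ∀ ρ : ℝ, ρ ∈ Set.Ioo (0 : ℝ) 1 →
      ∀ μ : Measure Cfg, IsBernoulliProduct ρ μ →
      (∀ (ℓ : ℕ) (h : Cfg → ℝ), LocalOn (Finset.Icc (1 : ℤ) (ℓ : ℤ)) h →
          (∀ β ∈ Set.Icc (0 : ℝ) 1, phi (Finset.Icc (1 : ℤ) (ℓ : ℤ)) h β = 0) →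
          ∫ η, h η ^ 2 ∂μ
            ≤ κ₀ * (ℓ : ℝ) ^ 2 * ∑ x ∈ Finset.Ico (1 : ℤ) (ℓ : ℤ),
                ∫ η, (discGrad x (x + 1) h η) ^ 2 ∂μ) →
      ∀ (ℓ : ℕ) (f : Cfg → ℝ), LocalOn (Finset.Icc (1 : ℤ) (ℓ : ℤ)) f →
        (∀ β ∈ Set.Icc (0 : ℝ) 1, phi (Finset.Icc (1 : ℤ) (ℓ : ℤ)) f β = 0) →
        ∀ g : Cfg → ℝ, IsLocal g →
          2 * ∫ η, f η * g η ∂μ - (- ∫ η, g η * genL r g η ∂μ)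
            ≤ c * (ℓ : ℝ) ^ 2 * Var μ f := by
  classical
  refine ⟨2 * max κ₀ 0 / ε₀, ?_⟩
  intro r hrloc hrb hr01 ρ hρ μ hμ hgap ℓ f hf hphif g hgloc
  haveI : IsProbabilityMeasure μ := hμ.1
  obtain ⟨ρ0, ρ1⟩ := hρ
  have hcardI : (Finset.Icc (1 : ℤ) (ℓ : ℤ)).card = ℓ := by rw [Int.card_Icc]; simp
  obtain ⟨B₀, hgB₀⟩ := hgloc
  set I : Finset ℤ := Finset.Icc (1 : ℤ) (ℓ : ℤ) with hI
  set B : Finset ℤ := B₀ ∪ I with hB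
  have hg : LocalOn B g := hgB₀.mono Finset.subset_union_left
  have hIB : I ⊆ B := Finset.subset_union_right
  set J : Finset ℤ := B \ I with hJ
  have hIJ : Disjoint I J := Finset.disjoint_sdiff
  have hIJB : I ∪ J = B := Finset.union_sdiff_of_subset hIB
  have hBJI : B \ J ⊆ I := by
    rw [hJ, sdiff_sdiff_right_self]
    exact (Finset.inter_subset_right : B ∩ I ⊆ I)
  have hwtnn : ∀ A S : Finset ℤ, 0 ≤ wt ρ A S := wt_nonneg ρ0.le ρ1.le
  have hwt1 : ∑ T ∈ J.powerset, wt ρ J T = 1 := sum_wt_eq_one hμ J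
  set gbar : Cfg → ℝ := gbarF ρ J g with hgbar
  have hgbar_loc : LocalOn I gbar :=
    LocalOn.finsum fun T _ => ((localOn_merge T hg).mono hBJI).const_mul _
  set ψ : Cfg → ℝ := psiFun ℓ gbar with hψ
  have hψ_loc : LocalOn I ψ := by
    intro η ξ hagr
    show condAvg ℓ (numOnes ℓ η) gbar = condAvg ℓ (numOnes ℓ ξ) gbar
    congr 1
    exact Finset.sum_congr rfl fun z hz => by rw [hagr z hz]
  set h : Cfg → ℝ := hF ρ J ℓ g with hhdef
  have hhdef' : ∀ η, h η = gbar η - ψ η := fun η => rfl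
  have hh_loc : LocalOn I h := by
    intro η ξ hagr
    rw [hhdef' η, hhdef' ξ, hgbar_loc η ξ hagr, hψ_loc η ξ hagr]
  have hcond : ∀ (F : Cfg → ℝ) (m : ℕ),
      condAvg ℓ m F = (∑ S ∈ I.powersetCard m, F (cfgOf S)) / (ℓ.choose m : ℝ) := by
    intro F m
    rw [condAvg, Finset.powersetCard_eq_filter]
  have hψ_cfg : ∀ m : ℕ, ∀ S ∈ I.powersetCard m, ψ (cfgOf S) = condAvg ℓ m gbar := by
    intro m S hS
    obtain ⟨hSsub, hScard⟩ := Finset.mem_powersetCard.1 hS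
    show condAvg ℓ (numOnes ℓ (cfgOf S)) gbar = condAvg ℓ m gbar
    rw [numOnes_cfgOf hSsub, hScard]
  have hsum_h : ∀ m : ℕ, ∑ S ∈ I.powersetCard m, h (cfgOf S) = 0 := by
    intro m
    by_cases hm : m ≤ ℓ
    · have hstep : ∀ S ∈ I.powersetCard m,
          h (cfgOf S) = gbar (cfgOf S)
            - (∑ S' ∈ I.powersetCard m, gbar (cfgOf S')) / (ℓ.choose m : ℝ) := by
        intro S hS
        rw [hhdef' (cfgOf S), hψ_cfg m S hS, hcond]
      rw [Finset.sum_congr rfl hstep, Finset.sum_sub_distrib, Finset.sum_const,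
        Finset.card_powersetCard, hcardI, nsmul_eq_mul]
      have hc : (ℓ.choose m : ℝ) ≠ 0 := Nat.cast_ne_zero.2 (Nat.choose_pos hm).ne'
      field_simp
      ring
    · have he : I.powersetCard m = ∅ :=
        Finset.powersetCard_eq_empty.2 (by rw [hcardI]; omega)
      simp [he]
  have hphih : ∀ β ∈ Set.Icc (0 : ℝ) 1, phi I h β = 0 := by
    intro β hβ
    rw [phi, sum_powerset_card]
    refine Finset.sum_eq_zero fun m hm => ?_
    have hstep : ∀ S ∈ I.powersetCard m,
        β ^ S.card * (1 - β) ^ (I.card - S.card) * h (cfgOf S)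
          = β ^ m * (1 - β) ^ (I.card - m) * h (cfgOf S) := by
      intro S hS
      rw [(Finset.mem_powersetCard.1 hS).2]
    rw [Finset.sum_congr rfl hstep, ← Finset.mul_sum, hsum_h m, mul_zero]
  have haf : ∀ m : ℕ, ∑ S ∈ I.powersetCard m, f (cfgOf S) = 0 := coeffs_zero hphif
  -- orthogonality of f to functions of the particle number
  have hfψ : ∫ η, f η * ψ η ∂μ = 0 := by
    rw [integral_localOn hμ (hf.mul hψ_loc), sum_powerset_card]
    refine Finset.sum_eq_zero fun m hm => ?_
    have hstep : ∀ S ∈ I.powersetCard m,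
        wt ρ I S * (f (cfgOf S) * ψ (cfgOf S))
          = (ρ ^ m * (1 - ρ) ^ (I.card - m) * condAvg ℓ m gbar) * f (cfgOf S) := by
      intro S hS
      rw [wt, (Finset.mem_powersetCard.1 hS).2, hψ_cfg m S hS]
      ring
    rw [Finset.sum_congr rfl hstep, ← Finset.mul_sum, haf m, mul_zero]
  have hfB : LocalOn B f := hf.mono hIB
  -- conditioning on the block: replace g by gbar
  have hfg_eq : ∫ η, f η * g η ∂μ = ∫ η, f η * gbar η ∂μ := by
    rw [integral_localOn hμ (hfB.mul hg), integral_localOn hμ (hf.mul hgbar_loc)]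
    conv_lhs => rw [← hIJB]
    rw [sum_split hIJ]
    refine Finset.sum_congr rfl fun S₁ hS₁ => ?_
    have hS₁I := Finset.mem_powerset.1 hS₁
    have hdisj : Disjoint S₁ J := Finset.disjoint_of_subset_left hS₁I hIJ
    have hfS : ∀ T ∈ J.powerset, f (cfgOf (S₁ ∪ T)) = f (cfgOf S₁) := by
      intro T hT
      apply hf
      intro z hz
      have hzT : z ∉ T := fun hzT =>
        Finset.disjoint_left.1 hIJ hz (Finset.mem_powerset.1 hT hzT)
      simp [cfgOf, hzT]
    calc ∑ T ∈ J.powerset, wt ρ I S₁ * wt ρ J T * (f (cfgOf (S₁ ∪ T)) * g (cfgOf (S₁ ∪ T)))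
        = ∑ T ∈ J.powerset,
            wt ρ I S₁ * (f (cfgOf S₁) * (wt ρ J T * g (merge J T (cfgOf S₁)))) := by
          refine Finset.sum_congr rfl fun T hT => ?_
          rw [merge_cfgOf (Finset.mem_powerset.1 hT) hdisj, hfS T hT]
          ring
      _ = wt ρ I S₁ * (f (cfgOf S₁) * gbar (cfgOf S₁)) := by
          rw [← Finset.mul_sum, ← Finset.mul_sum]
          rfl
  -- remove the conditional mean: f ⟂ ψ
  have hfh_eq : ∫ η, f η * h η ∂μ = ∫ η, f η * gbar η ∂μ := by
    have hsplit : (fun η => f η * h η) = fun η => f η * gbar η - f η * ψ η := by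
      funext η
      rw [hhdef' η]
      ring
    rw [hsplit, integral_sub (integrable_localOn (hf.mul hgbar_loc))
      (integrable_localOn (hf.mul hψ_loc)), hfψ, sub_zero]
  -- Cauchy–Schwarz
  have hVf0 : 0 ≤ ∫ η, f η ^ 2 ∂μ := integral_nonneg fun η => sq_nonneg _
  have hX0 : 0 ≤ ∫ η, h η ^ 2 ∂μ := integral_nonneg fun η => sq_nonneg _
  have hCS : (∫ η, f η * h η ∂μ) ^ 2 ≤ (∫ η, f η ^ 2 ∂μ) * ∫ η, h η ^ 2 ∂μ := by
    rw [integral_localOn hμ (hf.mul hh_loc), integral_localOn hμ hf.sq,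
      integral_localOn hμ hh_loc.sq]
    refine Finset.sum_sq_le_sum_mul_sum_of_sq_eq_mul I.powerset
      (fun S _ => mul_nonneg (hwtnn I S) (sq_nonneg _))
      (fun S _ => mul_nonneg (hwtnn I S) (sq_nonneg _)) (fun S _ => ?_)
    ring
  -- comparison of Dirichlet forms of h and g on the block
  have hkey : ∀ x ∈ Finset.Ico (1 : ℤ) (ℓ : ℤ),
      ∫ η, (discGrad x (x + 1) h η) ^ 2 ∂μ ≤ ∫ η, (discGrad x (x + 1) g η) ^ 2 ∂μ := by
    intro x hx
    rw [Finset.mem_Ico] at hx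
    have hxI : x ∈ I := by rw [hI, Finset.mem_Icc]; omega
    have hx1I : x + 1 ∈ I := by rw [hI, Finset.mem_Icc]; omega
    have hxB : x ∈ B := hIB hxI
    have hx1B : x + 1 ∈ B := hIB hx1I
    have hxJ : x ∉ J := Finset.disjoint_left.1 hIJ hxI
    have hx1J : x + 1 ∉ J := Finset.disjoint_left.1 hIJ hx1I
    have hψswap : ∀ η, ψ (swapCfg x (x + 1) η) = ψ η := by
      intro η
      show condAvg ℓ (numOnes ℓ (swapCfg x (x + 1) η)) gbar
        = condAvg ℓ (numOnes ℓ η) gbar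
      rw [numOnes_swap hxI hx1I]
    have hgradh : ∀ η, discGrad x (x + 1) h η = discGrad x (x + 1) gbar η := by
      intro η
      rw [discGrad, discGrad, hhdef' (swapCfg x (x + 1) η), hhdef' η, hψswap]
      ring
    have hgradbar : ∀ η, discGrad x (x + 1) gbar η
        = ∑ T ∈ J.powerset, wt ρ J T * discGrad x (x + 1) g (merge J T η) := by
      intro η
      rw [discGrad]
      show (∑ T ∈ J.powerset, wt ρ J T * g (merge J T (swapCfg x (x + 1) η)))
          - ∑ T ∈ J.powerset, wt ρ J T * g (merge J T η) = _
      rw [← Finset.sum_sub_distrib]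
      refine Finset.sum_congr rfl fun T hT => ?_
      rw [merge_swap hxJ hx1J, discGrad]
      ring
    have hJen : ∀ η, (discGrad x (x + 1) gbar η) ^ 2
        ≤ ∑ T ∈ J.powerset, wt ρ J T * (discGrad x (x + 1) g (merge J T η)) ^ 2 := by
      intro η
      rw [hgradbar η]
      have hCS2 := Finset.sum_sq_le_sum_mul_sum_of_sq_eq_mul J.powerset
        (r := fun T => wt ρ J T * discGrad x (x + 1) g (merge J T η))
        (f := fun T => wt ρ J T)
        (g := fun T => wt ρ J T * (discGrad x (x + 1) g (merge J T η)) ^ 2)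
        (fun T _ => hwtnn J T)
        (fun T _ => mul_nonneg (hwtnn J T) (sq_nonneg _))
        (fun T _ => by ring)
      rwa [hwt1, one_mul] at hCS2
    have hgB' : LocalOn B (discGrad x (x + 1) g) := hg.discGrad' hxB hx1B
    have hloc1 : LocalOn I (fun η => (discGrad x (x + 1) gbar η) ^ 2) :=
      (hgbar_loc.discGrad' hxI hx1I).sq
    have hlocT : ∀ T : Finset ℤ, LocalOn I
        (fun η => wt ρ J T * (discGrad x (x + 1) g (merge J T η)) ^ 2) := fun T =>
      (((localOn_merge T hgB').mono hBJI).sq).const_mul _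
    have hint1 : ∫ η, (discGrad x (x + 1) gbar η) ^ 2 ∂μ
        ≤ ∫ η, (∑ T ∈ J.powerset,
            wt ρ J T * (discGrad x (x + 1) g (merge J T η)) ^ 2) ∂μ :=
      integral_mono (integrable_localOn hloc1)
        (integrable_localOn (LocalOn.finsum fun T _ => hlocT T)) hJen
    have hint2 : ∫ η, (∑ T ∈ J.powerset,
          wt ρ J T * (discGrad x (x + 1) g (merge J T η)) ^ 2) ∂μ
        = ∫ η, (discGrad x (x + 1) g η) ^ 2 ∂μ := by
      rw [integral_finset_sum _ fun T _ => integrable_localOn (hlocT T)]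
      have hRHS : ∫ η, (discGrad x (x + 1) g η) ^ 2 ∂μ
          = ∑ S₁ ∈ I.powerset, ∑ T ∈ J.powerset,
              wt ρ I S₁ * wt ρ J T * (discGrad x (x + 1) g (cfgOf (S₁ ∪ T))) ^ 2 := by
        rw [integral_localOn hμ hgB'.sq]
        conv_lhs => rw [← hIJB]
        rw [sum_split hIJ]
      rw [hRHS, Finset.sum_comm]
      refine Finset.sum_congr rfl fun T hT => ?_
      have hTJ := Finset.mem_powerset.1 hT
      rw [integral_localOn hμ (hlocT T)]
      refine Finset.sum_congr rfl fun S₁ hS₁ => ?_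
      have hdisj : Disjoint S₁ J :=
        Finset.disjoint_of_subset_left (Finset.mem_powerset.1 hS₁) hIJ
      show wt ρ I S₁ * (wt ρ J T * (discGrad x (x + 1) g (merge J T (cfgOf S₁))) ^ 2) = _
      rw [merge_cfgOf hTJ hdisj]
      ring
    calc ∫ η, (discGrad x (x + 1) h η) ^ 2 ∂μ
        = ∫ η, (discGrad x (x + 1) gbar η) ^ 2 ∂μ := by
          congr 1
          funext η
          rw [hgradh η]
      _ ≤ _ := le_of_le_of_eq hint1 hint2
  -- spectral gap on the block
  have hEh0 : 0 ≤ ∑ x ∈ Finset.Ico (1 : ℤ) (ℓ : ℤ), ∫ η, (discGrad x (x + 1) h η) ^ 2 ∂μ :=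
    Finset.sum_nonneg fun x _ => integral_nonneg fun η => sq_nonneg _
  have hE0 : 0 ≤ ∑ x ∈ Finset.Ico (1 : ℤ) (ℓ : ℤ), ∫ η, (discGrad x (x + 1) g η) ^ 2 ∂μ :=
    Finset.sum_nonneg fun x _ => integral_nonneg fun η => sq_nonneg _
  have hDir : ε₀ / 2 * ∑ x ∈ Finset.Ico (1 : ℤ) (ℓ : ℤ), ∫ η, (discGrad x (x + 1) g η) ^ 2 ∂μ
      ≤ - ∫ η, g η * genL r g η ∂μ := dirichlet_bound hε hμ hrloc hrb hr01 hg ℓ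
  have hD0 : 0 ≤ - ∫ η, g η * genL r g η ∂μ :=
    le_trans (mul_nonneg (by linarith) hE0) hDir
  have hgapp : ∫ η, h η ^ 2 ∂μ ≤ κ₀ * (ℓ : ℝ) ^ 2
      * ∑ x ∈ Finset.Ico (1 : ℤ) (ℓ : ℤ), ∫ η, (discGrad x (x + 1) h η) ^ 2 ∂μ :=
    hgap ℓ h hh_loc hphih
  have hXY : ∫ η, h η ^ 2 ∂μ
      ≤ max κ₀ 0 * (ℓ : ℝ) ^ 2 * ((2 / ε₀) * (- ∫ η, g η * genL r g η ∂μ)) := by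
    have h1 : κ₀ * (ℓ : ℝ) ^ 2
          * ∑ x ∈ Finset.Ico (1 : ℤ) (ℓ : ℤ), ∫ η, (discGrad x (x + 1) h η) ^ 2 ∂μ
        ≤ max κ₀ 0 * (ℓ : ℝ) ^ 2
          * ∑ x ∈ Finset.Ico (1 : ℤ) (ℓ : ℤ), ∫ η, (discGrad x (x + 1) h η) ^ 2 ∂μ := by
      have := mul_le_mul_of_nonneg_right
        (mul_le_mul_of_nonneg_right (le_max_left κ₀ 0) (sq_nonneg (ℓ : ℝ))) hEh0
      linarith
    have h2 : max κ₀ 0 * (ℓ : ℝ) ^ 2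
          * ∑ x ∈ Finset.Ico (1 : ℤ) (ℓ : ℤ), ∫ η, (discGrad x (x + 1) h η) ^ 2 ∂μ
        ≤ max κ₀ 0 * (ℓ : ℝ) ^ 2
          * ∑ x ∈ Finset.Ico (1 : ℤ) (ℓ : ℤ), ∫ η, (discGrad x (x + 1) g η) ^ 2 ∂μ := by
      refine mul_le_mul_of_nonneg_left (Finset.sum_le_sum hkey) ?_
      exact mul_nonneg (le_max_right κ₀ 0) (sq_nonneg _)
    have h3 : ∑ x ∈ Finset.Ico (1 : ℤ) (ℓ : ℤ), ∫ η, (discGrad x (x + 1) g η) ^ 2 ∂μ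
        ≤ (2 / ε₀) * (- ∫ η, g η * genL r g η ∂μ) := by
      rw [div_mul_eq_mul_div, le_div_iff₀ hε]
      linarith
    have h4 := mul_le_mul_of_nonneg_left h3
      (mul_nonneg (le_max_right κ₀ 0) (sq_nonneg (ℓ : ℝ)))
    calc ∫ η, h η ^ 2 ∂μ ≤ _ := hgapp
      _ ≤ _ := h1
      _ ≤ _ := h2
      _ ≤ _ := by rw [mul_assoc]; rw [mul_assoc] at h4; exact h4
  -- mean of f vanishes, so Var f = ∫ f²
  have hfmean : ∫ η, f η ∂μ = 0 := by
    rw [integral_localOn hμ hf]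
    exact hphif ρ ⟨ρ0.le, ρ1.le⟩
  have hVar : Var μ f = ∫ η, f η ^ 2 ∂μ := by
    rw [Var, hfmean]
    simp
  -- final assembly
  have hfinal : 2 * ∫ η, f η * h η ∂μ
      ≤ 2 * max κ₀ 0 / ε₀ * (ℓ : ℝ) ^ 2 * ∫ η, f η ^ 2 ∂μ
        + (- ∫ η, g η * genL r g η ∂μ) := by
    set A : ℝ := 2 * max κ₀ 0 / ε₀ * (ℓ : ℝ) ^ 2 * ∫ η, f η ^ 2 ∂μ with hA
    set D : ℝ := - ∫ η, g η * genL r g η ∂μ with hD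
    have hA0 : 0 ≤ A := by
      have : (0:ℝ) ≤ 2 * max κ₀ 0 / ε₀ :=
        div_nonneg (by positivity) hε.le
      positivity
    have hAD : (∫ η, f η ^ 2 ∂μ) * ∫ η, h η ^ 2 ∂μ ≤ A * D := by
      have := mul_le_mul_of_nonneg_left hXY hVf0
      calc (∫ η, f η ^ 2 ∂μ) * ∫ η, h η ^ 2 ∂μ ≤ _ := this
        _ = A * D := by rw [hA, hD]; ring
    have ht : ∫ η, f η * h η ∂μ ≤ Real.sqrt (A * D) := by
      calc ∫ η, f η * h η ∂μ ≤ |∫ η, f η * h η ∂μ| := le_abs_self _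
        _ = Real.sqrt ((∫ η, f η * h η ∂μ) ^ 2) := (Real.sqrt_sq_eq_abs _).symm
        _ ≤ Real.sqrt (A * D) := Real.sqrt_le_sqrt (le_trans hCS hAD)
    have hsq : Real.sqrt (A * D) = Real.sqrt A * Real.sqrt D := Real.sqrt_mul hA0 D
    have hAM : 2 * Real.sqrt A * Real.sqrt D ≤ A + D := by
      have h2 := two_mul_le_add_sq (Real.sqrt A) (Real.sqrt D)
      rwa [Real.sq_sqrt hA0, Real.sq_sqrt hD0] at h2
    calc 2 * ∫ η, f η * h η ∂μ ≤ 2 * Real.sqrt (A * D) := by linarith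
      _ = 2 * Real.sqrt A * Real.sqrt D := by rw [hsq]; ring
      _ ≤ A + D := hAM
  rw [hVar, hfg_eq, ← hfh_eq]
  linarith
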